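/- Let α ≥ 3/2. There exists a constant C > 0, depending only on α, such that for all real T ≥ 1 and all t > 0, one has (t+T)^{3/2} ∫₀^t (1+t−s)^{−3/2} (s+T)^{−α} ds ≤ C T^{3/2−α}. -/

import Mathlib

open MeasureTheory Set

private lemma aux_cont {t T α : ℝ} (hT : 0 < T) {a b : ℝ} (ha : 0 ≤ a) (hab : a ≤ b)
    (hb : b ≤ t) :
    IntervalIntegrable (fun s => (1 + t - s) ^ (-(3:ℝ)/2) * (s + T) ^ (-α)) volume a b := by
  apply ContinuousOn.intervalIntegrable
  apply ContinuousOn.mul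
  · apply ContinuousOn.rpow_const (by fun_prop)
    intro x hx
    rw [Set.uIcc_of_le hab] at hx
    left
    have := hx.2
    nlinarith [hx.1, hx.2]
  · apply ContinuousOn.rpow_const (by fun_prop)
    intro x hx
    rw [Set.uIcc_of_le hab] at hx
    left
    nlinarith [hx.1]

private lemma aux_int_pow {α T b : ℝ} (hT : 1 ≤ T) (hb : 0 ≤ b) (hα : 3/2 ≤ α) :
    ∫ s in (0:ℝ)..b, (s + T) ^ (-α) ≤ 2 * T ^ (1 - α) := by
  have hT0 : (0:ℝ) < T := lt_of_lt_of_le one_pos hT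
  rw [intervalIntegral.integral_comp_add_right (fun x => x ^ (-α)) T]
  rw [integral_rpow (Or.inr ⟨by intro h; rw [neg_eq_iff_eq_neg] at h; linarith [h],
    by rw [Set.uIcc_of_le (by linarith : (0:ℝ) + T ≤ b + T)]; intro hmem;
       have := hmem.1; linarith⟩)]
  have he : -α + 1 = 1 - α := by ring
  rw [he, zero_add]
  have h1 : (b + T) ^ (1 - α) ≤ T ^ (1 - α) :=
    Real.rpow_le_rpow_of_nonpos hT0 (by linarith) (by linarith)
  have h2 : (0:ℝ) ≤ (b + T) ^ (1 - α) := Real.rpow_nonneg (by linarith) _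
  have h3 : (0:ℝ) ≤ T ^ (1 - α) := Real.rpow_nonneg (by linarith) _
  rw [div_le_iff_of_neg (by linarith : 1 - α < 0)]
  nlinarith

private lemma aux_int_ker {t a b : ℝ} (ha : 0 ≤ a) (hab : a ≤ b) (hb : b ≤ t) :
    ∫ s in a..b, (1 + t - s) ^ (-(3:ℝ)/2) ≤ 2 := by
  rw [show (∫ s in a..b, (1 + t - s) ^ (-(3:ℝ)/2)) =
      ∫ s in a..b, ((1 + t) - s) ^ (-(3:ℝ)/2) from rfl]
  rw [intervalIntegral.integral_comp_sub_left (fun x => x ^ (-(3:ℝ)/2)) (1 + t)]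
  rw [integral_rpow (Or.inr ⟨by norm_num,
    by rw [Set.uIcc_of_le (by linarith : 1 + t - b ≤ 1 + t - a)]; intro hmem;
       have := hmem.1; linarith⟩)]
  have h1 : (1 + t - b) ^ (-(3:ℝ)/2 + 1) ≤ 1 :=
    Real.rpow_le_one_of_one_le_of_nonpos (by linarith) (by norm_num)
  have h2 : (0:ℝ) ≤ (1 + t - a) ^ (-(3:ℝ)/2 + 1) := Real.rpow_nonneg (by linarith) _
  rw [div_le_iff_of_neg (by norm_num : -(3:ℝ)/2 + 1 < 0)]
  nlinarith

/-- Lemma 5.2: key convolution-type integral estimate uniform in the large parameter `T`. -/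
theorem stmt_0 (α : ℝ) (hα : 3/2 ≤ α) :
    ∃ C > (0:ℝ), ∀ T ≥ (1:ℝ), ∀ t > (0:ℝ),
      (t + T) ^ ((3:ℝ)/2) *
        ∫ s in Icc (0:ℝ) t, (1 + t - s) ^ (-(3:ℝ)/2) * (s + T) ^ (-α)
      ≤ C * T ^ ((3:ℝ)/2 - α) := by
  refine ⟨32 + 2 * 2 ^ α, by positivity, fun T hT t ht => ?_⟩
  have hT0 : (0:ℝ) < T := lt_of_lt_of_le one_pos hT
  have ht2 : (0:ℝ) ≤ t / 2 := by linarith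
  have ht2t : t / 2 ≤ t := by linarith
  set f : ℝ → ℝ := fun s => (1 + t - s) ^ (-(3:ℝ)/2) * (s + T) ^ (-α) with hf
  have hI1 : IntervalIntegrable f volume 0 (t/2) := aux_cont hT0 le_rfl ht2 ht2t
  have hI2 : IntervalIntegrable f volume (t/2) t := aux_cont hT0 ht2 ht2t le_rfl
  have hset : (∫ s in Icc (0:ℝ) t, f s) =
      (∫ s in (0:ℝ)..(t/2), f s) + ∫ s in (t/2)..t, f s := by
    rw [MeasureTheory.integral_Icc_eq_integral_Ioc,
      ← intervalIntegral.integral_of_le ht.le,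
      ← intervalIntegral.integral_add_adjacent_intervals hI1 hI2]
  rw [hset, mul_add]
  set E : ℝ := T ^ ((3:ℝ)/2 - α) with hE
  have hEpos : 0 ≤ E := Real.rpow_nonneg hT0.le _
  have htT : (0:ℝ) < t + T := by linarith
  have htTnn : (0:ℝ) ≤ (t + T) ^ ((3:ℝ)/2) := Real.rpow_nonneg htT.le _
  have h1half : (0:ℝ) < 1 + t/2 := by linarith
  -- piece 2
  have key2 : (t + T) ^ ((3:ℝ)/2) * (∫ s in (t/2)..t, f s) ≤ 2 * 2 ^ α * E := by
    have hptw : ∀ s ∈ Icc (t/2) t, f s ≤ (1 + t - s) ^ (-(3:ℝ)/2) * (t/2 + T) ^ (-α) := by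
      intro s hs
      apply mul_le_mul_of_nonneg_left _ (Real.rpow_nonneg (by nlinarith [hs.2]) _)
      exact Real.rpow_le_rpow_of_nonpos (by linarith) (by linarith [hs.1]) (by linarith)
    have hIg : IntervalIntegrable
        (fun s => (1 + t - s) ^ (-(3:ℝ)/2) * (t/2 + T) ^ (-α)) volume (t/2) t := by
      apply IntervalIntegrable.mul_const
      apply ContinuousOn.intervalIntegrable
      apply ContinuousOn.rpow_const (by fun_prop)
      intro x hx
      rw [Set.uIcc_of_le ht2t] at hx
      left; nlinarith [hx.1, hx.2]
    have hmono := intervalIntegral.integral_mono_on ht2t hI2 hIg hptw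
    rw [intervalIntegral.integral_mul_const] at hmono
    have hker := aux_int_ker ht2 ht2t le_rfl
    have hcnn : (0:ℝ) ≤ (t/2 + T) ^ (-α) := Real.rpow_nonneg (by linarith) _
    have hI2le : (∫ s in (t/2)..t, f s) ≤ 2 * (t/2 + T) ^ (-α) := by
      calc (∫ s in (t/2)..t, f s) ≤ _ := hmono
        _ ≤ 2 * (t/2 + T) ^ (-α) := mul_le_mul_of_nonneg_right hker hcnn
    calc (t + T) ^ ((3:ℝ)/2) * (∫ s in (t/2)..t, f s)
        ≤ (t + T) ^ ((3:ℝ)/2) * (2 * (t/2 + T) ^ (-α)) :=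
          mul_le_mul_of_nonneg_left hI2le htTnn
      _ ≤ (t + T) ^ ((3:ℝ)/2) * (2 * (2 ^ α * (t + T) ^ (-α))) := by
          apply mul_le_mul_of_nonneg_left _ htTnn
          apply mul_le_mul_of_nonneg_left _ (by norm_num)
          have hstep : (t/2 + T) ^ (-α) ≤ ((t + T)/2) ^ (-α) :=
            Real.rpow_le_rpow_of_nonpos (by linarith) (by linarith) (by linarith)
          calc (t/2 + T) ^ (-α) ≤ ((t + T)/2) ^ (-α) := hstep
            _ = 2 ^ α * (t + T) ^ (-α) := by
                rw [Real.div_rpow htT.le (by norm_num), Real.rpow_neg (by norm_num : (0:ℝ) ≤ 2)]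
                field_simp
      _ = 2 * 2 ^ α * ((t + T) ^ ((3:ℝ)/2) * (t + T) ^ (-α)) := by ring
      _ = 2 * 2 ^ α * (t + T) ^ ((3:ℝ)/2 - α) := by
          rw [← Real.rpow_add htT]; norm_num [sub_eq_add_neg]
      _ ≤ 2 * 2 ^ α * E := by
          apply mul_le_mul_of_nonneg_left _ (by positivity)
          exact Real.rpow_le_rpow_of_nonpos hT0 (by linarith) (by linarith)
  -- piece 1
  have key1 : (t + T) ^ ((3:ℝ)/2) * (∫ s in (0:ℝ)..(t/2), f s) ≤ 32 * E := by
    rcases le_total t T with hc | hc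
    · -- t ≤ T
      have hptw : ∀ s ∈ Icc (0:ℝ) (t/2), f s ≤ (1 + t/2) ^ (-(3:ℝ)/2) * T ^ (-α) := by
        intro s hs
        apply mul_le_mul
        · exact Real.rpow_le_rpow_of_nonpos h1half (by linarith [hs.2]) (by norm_num)
        · exact Real.rpow_le_rpow_of_nonpos hT0 (by linarith [hs.1]) (by linarith)
        · exact Real.rpow_nonneg (by linarith [hs.1]) _
        · exact Real.rpow_nonneg h1half.le _
      have hmono := intervalIntegral.integral_mono_on ht2 hI1
        (intervalIntegrable_const) hptw
      rw [intervalIntegral.integral_const, smul_eq_mul, sub_zero] at hmono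
      have hA : (t + T) ^ ((3:ℝ)/2) ≤ 2 ^ ((3:ℝ)/2) * T ^ ((3:ℝ)/2) := by
        rw [← Real.mul_rpow (by norm_num) hT0.le]
        exact Real.rpow_le_rpow htT.le (by linarith) (by norm_num)
      have hB : t/2 * (1 + t/2) ^ (-(3:ℝ)/2) ≤ 1 := by
        rw [show -(3:ℝ)/2 = -((3:ℝ)/2) by norm_num, Real.rpow_neg h1half.le,
          ← div_eq_mul_inv, div_le_one (Real.rpow_pos_of_pos h1half _)]
        calc t/2 ≤ 1 + t/2 := by linarith
          _ = (1 + t/2) ^ (1:ℝ) := (Real.rpow_one _).symm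
          _ ≤ (1 + t/2) ^ ((3:ℝ)/2) :=
            Real.rpow_le_rpow_of_exponent_le (by linarith) (by norm_num)
      have h232 : (2:ℝ) ^ ((3:ℝ)/2) ≤ 32 := by
        calc (2:ℝ) ^ ((3:ℝ)/2) ≤ 2 ^ ((5:ℕ):ℝ) :=
            Real.rpow_le_rpow_of_exponent_le one_le_two (by norm_num)
          _ = 32 := by rw [Real.rpow_natCast]; norm_num
      calc (t + T) ^ ((3:ℝ)/2) * (∫ s in (0:ℝ)..(t/2), f s)
          ≤ (t + T) ^ ((3:ℝ)/2) * (t/2 * ((1 + t/2) ^ (-(3:ℝ)/2) * T ^ (-α))) := by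
            apply mul_le_mul_of_nonneg_left hmono htTnn
        _ = (t + T) ^ ((3:ℝ)/2) * (t/2 * (1 + t/2) ^ (-(3:ℝ)/2)) * T ^ (-α) := by ring
        _ ≤ 2 ^ ((3:ℝ)/2) * T ^ ((3:ℝ)/2) * 1 * T ^ (-α) := by
            apply mul_le_mul_of_nonneg_right _ (Real.rpow_nonneg hT0.le _)
            apply mul_le_mul hA hB _ (by positivity)
            exact mul_nonneg ht2 (Real.rpow_nonneg h1half.le _)
        _ = 2 ^ ((3:ℝ)/2) * (T ^ ((3:ℝ)/2) * T ^ (-α)) := by ring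
        _ = 2 ^ ((3:ℝ)/2) * E := by
            rw [← Real.rpow_add hT0, hE, sub_eq_add_neg]
        _ ≤ 32 * E := mul_le_mul_of_nonneg_right h232 hEpos
    · -- T ≤ t
      have hptw : ∀ s ∈ Icc (0:ℝ) (t/2), f s ≤ (1 + t/2) ^ (-(3:ℝ)/2) * (s + T) ^ (-α) := by
        intro s hs
        apply mul_le_mul_of_nonneg_right _ (Real.rpow_nonneg (by linarith [hs.1]) _)
        exact Real.rpow_le_rpow_of_nonpos h1half (by linarith [hs.2]) (by norm_num)
      have hIg : IntervalIntegrable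
          (fun s => (1 + t/2) ^ (-(3:ℝ)/2) * (s + T) ^ (-α)) volume 0 (t/2) := by
        apply IntervalIntegrable.const_mul
        apply ContinuousOn.intervalIntegrable
        apply ContinuousOn.rpow_const (by fun_prop)
        intro x hx
        rw [Set.uIcc_of_le ht2] at hx
        left; nlinarith [hx.1]
      have hmono := intervalIntegral.integral_mono_on ht2 hI1 hIg hptw
      rw [intervalIntegral.integral_const_mul] at hmono
      have hint := aux_int_pow hT ht2 hα
      have hknn : (0:ℝ) ≤ (1 + t/2) ^ (-(3:ℝ)/2) := Real.rpow_nonneg h1half.le _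
      have hI1le : (∫ s in (0:ℝ)..(t/2), f s) ≤ (1 + t/2) ^ (-(3:ℝ)/2) * (2 * T ^ (1 - α)) :=
        le_trans hmono (mul_le_mul_of_nonneg_left hint hknn)
      have hA : (t + T) ^ ((3:ℝ)/2) ≤ 16 * (1 + t/2) ^ ((3:ℝ)/2) := by
        have h4 : (4:ℝ) ^ ((3:ℝ)/2) ≤ 16 := by
          calc (4:ℝ) ^ ((3:ℝ)/2) ≤ 4 ^ ((2:ℕ):ℝ) :=
              Real.rpow_le_rpow_of_exponent_le (by norm_num) (by norm_num)
            _ = 16 := by rw [Real.rpow_natCast]; norm_num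
        calc (t + T) ^ ((3:ℝ)/2) ≤ (4 * (1 + t/2)) ^ ((3:ℝ)/2) :=
            Real.rpow_le_rpow htT.le (by linarith) (by norm_num)
          _ = 4 ^ ((3:ℝ)/2) * (1 + t/2) ^ ((3:ℝ)/2) := Real.mul_rpow (by norm_num) h1half.le
          _ ≤ 16 * (1 + t/2) ^ ((3:ℝ)/2) :=
            mul_le_mul_of_nonneg_right h4 (Real.rpow_nonneg h1half.le _)
      have hcancel : (1 + t/2) ^ ((3:ℝ)/2) * (1 + t/2) ^ (-(3:ℝ)/2) = 1 := by
        rw [← Real.rpow_add h1half]; norm_num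
      have hTexp : T ^ (1 - α) ≤ E :=
        Real.rpow_le_rpow_of_exponent_le hT (by linarith)
      have hI1nn : (0:ℝ) ≤ (1 + t/2) ^ (-(3:ℝ)/2) * (2 * T ^ (1 - α)) := by positivity
      calc (t + T) ^ ((3:ℝ)/2) * (∫ s in (0:ℝ)..(t/2), f s)
          ≤ (t + T) ^ ((3:ℝ)/2) * ((1 + t/2) ^ (-(3:ℝ)/2) * (2 * T ^ (1 - α))) :=
            mul_le_mul_of_nonneg_left hI1le htTnn
        _ ≤ 16 * (1 + t/2) ^ ((3:ℝ)/2) * ((1 + t/2) ^ (-(3:ℝ)/2) * (2 * T ^ (1 - α))) :=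
            mul_le_mul_of_nonneg_right hA hI1nn
        _ = 32 * ((1 + t/2) ^ ((3:ℝ)/2) * (1 + t/2) ^ (-(3:ℝ)/2)) * T ^ (1 - α) := by ring
        _ = 32 * T ^ (1 - α) := by rw [hcancel]; ring
        _ ≤ 32 * E := mul_le_mul_of_nonneg_left hTexp (by norm_num)
  calc (t + T) ^ ((3:ℝ)/2) * (∫ s in (0:ℝ)..(t/2), f s)
        + (t + T) ^ ((3:ℝ)/2) * (∫ s in (t/2)..t, f s)
      ≤ 32 * E + 2 * 2 ^ α * E := add_le_add key1 key2
    _ = (32 + 2 * 2 ^ α) * E := by ring
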